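/- Let d ≥ 2, let l ≥ 1, and let ψ⁽¹⁾, …, ψ⁽ˡ⁾ be elements of the free ℂ-algebra on two generators X, Y. For ζ, ξ ∈ ℂ^{d×d}, let ψ⁽ᵏ⁾(ζ, ξ) ∈ ℂ^{d×d} denote the image of ψ⁽ᵏ⁾ under the ℂ-algebra homomorphism sending X ↦ ζ, Y ↦ ξ. Assume that for each k: (i) the image P⁽ᵏ⁾ of ψ⁽ᵏ⁾ under the ℂ-algebra homomorphism to ℂ[x, y] sending X ↦ x, Y ↦ y is nonzero; and (ii) the (1,2) entry Q⁽ᵏ⁾ of the 2×2 matrix over ℂ[x, y, z, t] obtained by evaluating ψ⁽ᵏ⁾ at X ↦ [[x, z], [0, x]] and Y ↦ [[y, t], [0, y]] is nonzero. Then the set of pairs (ζ, ξ) ∈ (ℂ^{d×d})² such that every entry ψ⁽ᵏ⁾(ζ, ξ)_{ij} (1 ≤ i, j ≤ d, 1 ≤ k ≤ l) is nonzero and det(ψ⁽ᵏ⁾(ζ, ξ)) ≠ 0 for every k, is open and dense in (ℂ^{d×d})². -/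

import Mathlib

open Matrix MvPolynomial
open Topology Filter

/-- Evaluation of a noncommutative polynomial `ψ` (an element of the free `ℂ`-algebra on
two generators `X`, `Y`) at a pair `(ζ, ξ)` of elements of a `ℂ`-algebra: the image of
`ψ` under the unique `ℂ`-algebra homomorphism sending `X ↦ ζ` and `Y ↦ ξ`. -/
noncomputable def algEval {A : Type*} [Ring A] [Algebra ℂ A]
    (ψ : FreeAlgebra ℂ (Fin 2)) (ζ ξ : A) : A :=
  FreeAlgebra.lift ℂ ![ζ, ξ] ψ

/-- The image of `ψ` in the commutative polynomial ring `ℂ[x, y]`, i.e. under the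
`ℂ`-algebra homomorphism `X ↦ x`, `Y ↦ y`. -/
noncomputable def commEval (ψ : FreeAlgebra ℂ (Fin 2)) : MvPolynomial (Fin 2) ℂ :=
  FreeAlgebra.lift ℂ (fun i => MvPolynomial.X i) ψ

/-- The `(1,2)` entry of the `2 × 2` matrix over `ℂ[x, y, z, t]` obtained by evaluating
`ψ` at `X ↦ [[x, z], [0, x]]` and `Y ↦ [[y, t], [0, y]]` (variables indexed
`x ↦ 0, y ↦ 1, z ↦ 2, t ↦ 3`). -/
noncomputable def upperEntry (ψ : FreeAlgebra ℂ (Fin 2)) : MvPolynomial (Fin 4) ℂ :=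
  (algEval ψ
    (!![X 0, X 2; 0, X 0] : Matrix (Fin 2) (Fin 2) (MvPolynomial (Fin 4) ℂ))
    (!![X 1, X 3; 0, X 1] : Matrix (Fin 2) (Fin 2) (MvPolynomial (Fin 4) ℂ))) 0 1

lemma algEval_natural {A B : Type*} [Ring A] [Algebra ℂ A] [Ring B] [Algebra ℂ B]
    (φ : A →ₐ[ℂ] B) (ψ : FreeAlgebra ℂ (Fin 2)) (ζ ξ : A) :
    φ (algEval ψ ζ ξ) = algEval ψ (φ ζ) (φ ξ) := by
  have h : φ.comp (FreeAlgebra.lift ℂ ![ζ, ξ]) = FreeAlgebra.lift ℂ ![φ ζ, φ ξ] := by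
    apply FreeAlgebra.hom_ext
    funext i
    fin_cases i <;> simp
  exact congrArg (fun g => g ψ) h

-- multiplication in the "dual number" span
lemma key_mul {R : Type*} [CommRing R] {n : Type*} [DecidableEq n] [Fintype n]
    {i j : n} (hij : i ≠ j) (a b a' b' : R) :
    (a • (1 : Matrix n n R) + b • Matrix.single i j 1) *
      (a' • (1 : Matrix n n R) + b' • Matrix.single i j 1) =
    (a * a') • (1 : Matrix n n R) + (a * b' + b * a') • Matrix.single i j 1 := by
  have hE : (Matrix.single i j (1:R)) * Matrix.single i j 1 = 0 :=
    Matrix.single_mul_single_of_ne (c := (1:R)) i j i (Ne.symm hij) 1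
  rw [add_mul, mul_add, mul_add]
  rw [smul_mul_assoc, smul_mul_assoc, smul_mul_assoc, smul_mul_assoc,
    mul_smul_comm, mul_smul_comm, mul_smul_comm, mul_smul_comm]
  rw [one_mul, mul_one, hE]
  rw [smul_smul, smul_smul, smul_smul, smul_smul]
  simp [add_smul, mul_comm]
  abel

lemma algEval_mul {A : Type*} [Ring A] [Algebra ℂ A] (p q : FreeAlgebra ℂ (Fin 2))
    (ζ ξ : A) : algEval (p * q) ζ ξ = algEval p ζ ξ * algEval q ζ ξ :=
  map_mul (FreeAlgebra.lift ℂ ![ζ, ξ]) p q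

lemma algEval_add {A : Type*} [Ring A] [Algebra ℂ A] (p q : FreeAlgebra ℂ (Fin 2))
    (ζ ξ : A) : algEval (p + q) ζ ξ = algEval p ζ ξ + algEval q ζ ξ :=
  map_add (FreeAlgebra.lift ℂ ![ζ, ξ]) p q

lemma algEval_algebraMap {A : Type*} [Ring A] [Algebra ℂ A] (r : ℂ) (ζ ξ : A) :
    algEval (algebraMap ℂ (FreeAlgebra ℂ (Fin 2)) r) ζ ξ = algebraMap ℂ A r :=
  AlgHom.commutes (FreeAlgebra.lift ℂ ![ζ, ξ]) r

lemma eps_invariant {R : Type*} [CommRing R] [Algebra ℂ R]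
    {n : Type*} [DecidableEq n] [Fintype n] {i j : n} (hij : i ≠ j)
    {m : Type*} [DecidableEq m] [Fintype m] {i' j' : m} (hij' : i' ≠ j')
    (x y z t : R) (ψ : FreeAlgebra ℂ (Fin 2)) :
    ∃ a b : R,
      algEval ψ (x • (1 : Matrix n n R) + z • Matrix.single i j 1)
          (y • 1 + t • Matrix.single i j 1) = a • 1 + b • Matrix.single i j 1 ∧
      algEval ψ (x • (1 : Matrix m m R) + z • Matrix.single i' j' 1)
          (y • 1 + t • Matrix.single i' j' 1) = a • 1 + b • Matrix.single i' j' 1 := by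
  induction ψ using FreeAlgebra.induction with
  | grade0 r =>
      refine ⟨algebraMap ℂ R r, 0, ?_, ?_⟩ <;>
      · rw [algEval_algebraMap, IsScalarTower.algebraMap_apply ℂ R,
          Algebra.algebraMap_eq_smul_one]
        simp
  | grade1 v =>
      fin_cases v
      · exact ⟨x, z, by simp [algEval], by simp [algEval]⟩
      · exact ⟨y, t, by simp [algEval], by simp [algEval]⟩
  | mul p q hp hq =>
      obtain ⟨a, b, h1, h2⟩ := hp
      obtain ⟨a', b', h1', h2'⟩ := hq
      refine ⟨a * a', a * b' + b * a', ?_, ?_⟩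
      · rw [algEval_mul, h1, h1', key_mul hij]
      · rw [algEval_mul, h2, h2', key_mul hij']
  | add p q hp hq =>
      obtain ⟨a, b, h1, h2⟩ := hp
      obtain ⟨a', b', h1', h2'⟩ := hq
      refine ⟨a + a', b + b', ?_, ?_⟩
      · rw [algEval_add, h1, h1']; simp [add_smul]; abel
      · rw [algEval_add, h2, h2']; simp [add_smul]; abel

lemma my_aeval_eq_eval (σ : Type*) (f : σ → ℂ) (p : MvPolynomial σ ℂ) :
    aeval f p = eval f p := by
  rw [aeval_def, ← eval₂_id, Algebra.algebraMap_self]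

lemma commEval_eq (ψ : FreeAlgebra ℂ (Fin 2)) :
    commEval ψ = algEval ψ (X 0) (X 1) := by
  have h : (fun i => (X i : MvPolynomial (Fin 2) ℂ)) = ![X 0, X 1] := by
    funext i; fin_cases i <;> simp
  unfold commEval algEval
  rw [h]

-- scalar evaluation
lemma scalar_eval {d : ℕ} (ψ : FreeAlgebra ℂ (Fin 2)) (c : Fin 2 → ℂ) :
    algEval ψ ((c 0) • (1 : Matrix (Fin d) (Fin d) ℂ)) ((c 1) • 1)
      = (eval c (commEval ψ)) • 1 := by
  have := algEval_natural
    ((Algebra.ofId ℂ (Matrix (Fin d) (Fin d) ℂ)).comp (aeval c)) ψ (X 0) (X 1)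
  rw [← commEval_eq] at this
  simp only [AlgHom.comp_apply, aeval_X] at this
  have h0 : ∀ r : ℂ, (Algebra.ofId ℂ (Matrix (Fin d) (Fin d) ℂ)) r = r • 1 := fun r =>
    Algebra.algebraMap_eq_smul_one r
  rw [h0, h0, h0, my_aeval_eq_eval] at this
  exact this.symm

lemma tri_eq {R : Type*} [CommRing R] (a b : R) :
    !![a, b; 0, a] = a • (1 : Matrix (Fin 2) (Fin 2) R) + b • Matrix.single 0 1 1 := by
  ext i j
  fin_cases i <;> fin_cases j <;>
    simp [Matrix.add_apply, Matrix.smul_apply, Matrix.one_apply, Matrix.single]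

lemma entry_smul_form {R : Type*} [CommRing R] {n : Type*} [DecidableEq n] [Fintype n]
    {i j : n} (hij : i ≠ j) (a b : R) :
    ((a • (1 : Matrix n n R) + b • Matrix.single i j 1) : Matrix n n R) i j = b := by
  simp [Matrix.add_apply, Matrix.smul_apply, Matrix.one_apply_ne hij]

lemma eps_eval {d : ℕ} {i j : Fin d} (hij : i ≠ j) (ψ : FreeAlgebra ℂ (Fin 2))
    (c : Fin 4 → ℂ) :
    (algEval ψ ((c 0) • (1 : Matrix (Fin d) (Fin d) ℂ) + (c 2) • Matrix.single i j 1)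
        ((c 1) • 1 + (c 3) • Matrix.single i j 1) : Matrix (Fin d) (Fin d) ℂ) i j
      = eval c (upperEntry ψ) := by
  have h01 : (0 : Fin 2) ≠ 1 := by decide
  obtain ⟨a, b, h2, hd⟩ := eps_invariant (R := ℂ) h01 hij (c 0) (c 1) (c 2) (c 3) ψ
  have hmap := algEval_natural (AlgHom.mapMatrix (aeval c)) ψ
    (!![X 0, X 2; 0, X 0] : Matrix (Fin 2) (Fin 2) (MvPolynomial (Fin 4) ℂ))
    (!![X 1, X 3; 0, X 1] : Matrix (Fin 2) (Fin 2) (MvPolynomial (Fin 4) ℂ))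
  have hA : (AlgHom.mapMatrix (aeval c))
      (!![X 0, X 2; 0, X 0] : Matrix (Fin 2) (Fin 2) (MvPolynomial (Fin 4) ℂ))
      = !![c 0, c 2; 0, c 0] := by
    ext i' j'
    fin_cases i' <;> fin_cases j' <;> simp
  have hB : (AlgHom.mapMatrix (aeval c))
      (!![X 1, X 3; 0, X 1] : Matrix (Fin 2) (Fin 2) (MvPolynomial (Fin 4) ℂ))
      = !![c 1, c 3; 0, c 1] := by
    ext i' j'
    fin_cases i' <;> fin_cases j' <;> simp
  rw [hA, hB] at hmap
  have hentry : algEval ψ !![c 0, c 2; 0, c 0] !![c 1, c 3; 0, c 1] 0 1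
      = eval c (upperEntry ψ) := by
    rw [← hmap]
    simp only [AlgHom.mapMatrix_apply, Matrix.map_apply]
    rw [my_aeval_eq_eval]
    rfl
  rw [tri_eq, tri_eq] at hentry
  rw [h2, entry_smul_form h01] at hentry
  rw [hd, entry_smul_form hij, hentry]

noncomputable def pv {d : ℕ}
    (p : Matrix (Fin d) (Fin d) ℂ × Matrix (Fin d) (Fin d) ℂ) :
    Fin 2 × Fin d × Fin d → ℂ :=
  fun s => ![p.1, p.2] s.1 s.2.1 s.2.2

noncomputable def gen (d : ℕ) (c : Fin 2) :
    Matrix (Fin d) (Fin d) (MvPolynomial (Fin 2 × Fin d × Fin d) ℂ) :=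
  Matrix.of fun i j => X (c, i, j)

lemma map_algEval {d : ℕ} (ψ : FreeAlgebra ℂ (Fin 2))
    (p : Matrix (Fin d) (Fin d) ℂ × Matrix (Fin d) (Fin d) ℂ) :
    (AlgHom.mapMatrix (aeval (pv p))) (algEval ψ (gen d 0) (gen d 1))
      = algEval ψ p.1 p.2 := by
  rw [algEval_natural]
  congr 1 <;>
  · ext i j
    simp [gen, pv, AlgHom.mapMatrix_apply, Matrix.map_apply]

lemma entry_eval {d : ℕ} (ψ : FreeAlgebra ℂ (Fin 2))
    (p : Matrix (Fin d) (Fin d) ℂ × Matrix (Fin d) (Fin d) ℂ) (i j : Fin d) :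
    eval (pv p) ((algEval ψ (gen d 0) (gen d 1)) i j) = algEval ψ p.1 p.2 i j := by
  rw [← map_algEval ψ p]
  simp [AlgHom.mapMatrix_apply, Matrix.map_apply, my_aeval_eq_eval]

lemma det_eval {d : ℕ} (ψ : FreeAlgebra ℂ (Fin 2))
    (p : Matrix (Fin d) (Fin d) ℂ × Matrix (Fin d) (Fin d) ℂ) :
    eval (pv p) ((algEval ψ (gen d 0) (gen d 1)).det) = (algEval ψ p.1 p.2).det := by
  rw [← map_algEval ψ p, AlgHom.mapMatrix_apply, ← my_aeval_eq_eval]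
  exact AlgHom.map_det (aeval (pv p)) _

lemma exists_nonzero_eval {σ : Type*} {p : MvPolynomial σ ℂ} (h : p ≠ 0) :
    ∃ c : σ → ℂ, eval c p ≠ 0 := by
  by_contra hc
  push_neg at hc
  exact h (MvPolynomial.funext fun x => by rw [hc x, map_zero])

lemma det_gen_ne {d : ℕ} (hd : 0 < d) (ψ : FreeAlgebra ℂ (Fin 2))
    (h₁ : commEval ψ ≠ 0) :
    (algEval ψ (gen d 0) (gen d 1)).det ≠ 0 := by
  obtain ⟨c, hc⟩ := exists_nonzero_eval h₁
  intro h0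
  set p : Matrix (Fin d) (Fin d) ℂ × Matrix (Fin d) (Fin d) ℂ := (c 0 • 1, c 1 • 1) with hp
  have hde := det_eval ψ p
  rw [h0, map_zero] at hde
  have hsc : algEval ψ p.1 p.2 = (eval c (commEval ψ)) • 1 := scalar_eval ψ c
  rw [hsc] at hde
  rw [Matrix.det_smul, Matrix.det_one, mul_one, Fintype.card_fin] at hde
  exact hc (pow_eq_zero_iff hd.ne' |>.mp hde.symm)

lemma entry_gen_ne {d : ℕ} (ψ : FreeAlgebra ℂ (Fin 2))
    (h₁ : commEval ψ ≠ 0) (h₂ : upperEntry ψ ≠ 0) (i j : Fin d) :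
    (algEval ψ (gen d 0) (gen d 1)) i j ≠ 0 := by
  by_cases hij : i = j
  · subst hij
    obtain ⟨c, hc⟩ := exists_nonzero_eval h₁
    intro h0
    set p : Matrix (Fin d) (Fin d) ℂ × Matrix (Fin d) (Fin d) ℂ := (c 0 • 1, c 1 • 1) with hp
    have hde := entry_eval ψ p i i
    rw [h0, map_zero] at hde
    have hsc : algEval ψ p.1 p.2 = (eval c (commEval ψ)) • 1 := scalar_eval ψ c
    rw [hsc] at hde
    simp [Matrix.smul_apply, Matrix.one_apply_eq] at hde
    exact hc hde.symm
  · obtain ⟨c, hc⟩ := exists_nonzero_eval h₂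
    intro h0
    set p : Matrix (Fin d) (Fin d) ℂ × Matrix (Fin d) (Fin d) ℂ :=
      (c 0 • 1 + c 2 • Matrix.single i j 1, c 1 • 1 + c 3 • Matrix.single i j 1) with hp
    have hde := entry_eval ψ p i j
    rw [h0, map_zero] at hde
    rw [show (algEval ψ p.1 p.2 : Matrix (Fin d) (Fin d) ℂ) i j = eval c (upperEntry ψ) from
      eps_eval hij ψ c] at hde
    exact hc hde.symm

/-- if each `ψ⁽ᵏ⁾` is generic (its commutative image in `ℂ[x,y]` is nonzero
and the `(1,2)` entry of its evaluation at the generic upper-triangular `2 × 2` matrices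
is nonzero), then the set of pairs `(ζ, ξ)` of `d × d` matrices at which every entry of
every `ψ⁽ᵏ⁾(ζ, ξ)` is nonzero and every `det(ψ⁽ᵏ⁾(ζ, ξ))` is nonzero, is open and dense. -/
theorem stmt15 (d : ℕ) (hd : 2 ≤ d) (l : ℕ) (hl : 1 ≤ l)
    (ψ : Fin l → FreeAlgebra ℂ (Fin 2))
    (h₁ : ∀ k, commEval (ψ k) ≠ 0)
    (h₂ : ∀ k, upperEntry (ψ k) ≠ 0) :
    IsOpen {p : Matrix (Fin d) (Fin d) ℂ × Matrix (Fin d) (Fin d) ℂ |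
        (∀ (k : Fin l) (i j : Fin d), algEval (ψ k) p.1 p.2 i j ≠ 0) ∧
        (∀ k : Fin l, (algEval (ψ k) p.1 p.2).det ≠ 0)} ∧
    Dense {p : Matrix (Fin d) (Fin d) ℂ × Matrix (Fin d) (Fin d) ℂ |
        (∀ (k : Fin l) (i j : Fin d), algEval (ψ k) p.1 p.2 i j ≠ 0) ∧
        (∀ k : Fin l, (algEval (ψ k) p.1 p.2).det ≠ 0)} := by
  classical
  set F : MvPolynomial (Fin 2 × Fin d × Fin d) ℂ :=
    ∏ k : Fin l, ((algEval (ψ k) (gen d 0) (gen d 1)).det *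
      ∏ i : Fin d, ∏ j : Fin d, (algEval (ψ k) (gen d 0) (gen d 1)) i j) with hF
  have hF0 : F ≠ 0 := by
    rw [hF]
    refine Finset.prod_ne_zero_iff.mpr fun k _ => mul_ne_zero
      (det_gen_ne (lt_of_lt_of_le two_pos hd) _ (h₁ k))
      (Finset.prod_ne_zero_iff.mpr fun i _ =>
        Finset.prod_ne_zero_iff.mpr fun j _ => entry_gen_ne _ (h₁ k) (h₂ k) i j)
  set f : Matrix (Fin d) (Fin d) ℂ × Matrix (Fin d) (Fin d) ℂ → ℂ :=
    fun p => eval (pv p) F with hf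
  have hfeq : ∀ p, f p = ∏ k : Fin l, ((algEval (ψ k) p.1 p.2).det *
      ∏ i : Fin d, ∏ j : Fin d, algEval (ψ k) p.1 p.2 i j) := by
    intro p
    simp only [hf, hF]
    rw [map_prod]
    refine Finset.prod_congr rfl fun k _ => ?_
    rw [_root_.map_mul, det_eval, map_prod]
    congr 1
    refine Finset.prod_congr rfl fun i _ => ?_
    rw [map_prod]
    exact Finset.prod_congr rfl fun j _ => entry_eval (ψ k) p i j
  have hset : {p : Matrix (Fin d) (Fin d) ℂ × Matrix (Fin d) (Fin d) ℂ |
        (∀ (k : Fin l) (i j : Fin d), algEval (ψ k) p.1 p.2 i j ≠ 0) ∧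
        (∀ k : Fin l, (algEval (ψ k) p.1 p.2).det ≠ 0)} = f ⁻¹' {0}ᶜ := by
    ext p
    simp only [Set.mem_setOf_eq, Set.mem_preimage, Set.mem_compl_iff,
      Set.mem_singleton_iff]
    rw [hfeq p]
    constructor
    · rintro ⟨he, hdet⟩
      exact Finset.prod_ne_zero_iff.mpr fun k _ =>
        mul_ne_zero (hdet k) (Finset.prod_ne_zero_iff.mpr fun i _ =>
          Finset.prod_ne_zero_iff.mpr fun j _ => he k i j)
    · intro h
      have h' := Finset.prod_ne_zero_iff.mp h
      constructor
      · intro k i j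
        have hk := (mul_ne_zero_iff.mp (h' k (Finset.mem_univ k))).2
        have hi := Finset.prod_ne_zero_iff.mp hk i (Finset.mem_univ i)
        exact Finset.prod_ne_zero_iff.mp hi j (Finset.mem_univ j)
      · exact fun k => (mul_ne_zero_iff.mp (h' k (Finset.mem_univ k))).1
  have hpvcont : Continuous (fun p : Matrix (Fin d) (Fin d) ℂ × Matrix (Fin d) (Fin d) ℂ
      => pv p) := by
    refine continuous_pi fun s => ?_
    obtain ⟨c, i, j⟩ := s
    fin_cases c
    · exact (continuous_fst.matrix_elem i j :
        Continuous fun p : Matrix (Fin d) (Fin d) ℂ × Matrix (Fin d) (Fin d) ℂ => p.1 i j)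
    · exact (continuous_snd.matrix_elem i j :
        Continuous fun p : Matrix (Fin d) (Fin d) ℂ × Matrix (Fin d) (Fin d) ℂ => p.2 i j)
  have hcont : Continuous f := by
    rw [hf]
    exact (MvPolynomial.continuous_eval F).comp hpvcont
  rw [hset]
  constructor
  · exact isOpen_compl_singleton.preimage hcont
  · intro p
    rw [mem_closure_iff_nhds]
    intro U hU
    obtain ⟨x, hx⟩ := exists_nonzero_eval hF0
    set p' : Matrix (Fin d) (Fin d) ℂ × Matrix (Fin d) (Fin d) ℂ :=
      (Matrix.of fun i j => x (0, i, j), Matrix.of fun i j => x (1, i, j)) with hp'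
    set G : Polynomial ℂ := MvPolynomial.eval₂ Polynomial.C
      (fun s => Polynomial.C (pv p s) + Polynomial.X * Polynomial.C (x s - pv p s)) F with hG
    have hGeval : ∀ t : ℂ,
        Polynomial.eval t G = eval (fun s => pv p s + t * (x s - pv p s)) F := by
      intro t
      rw [hG]
      have hcl := MvPolynomial.eval₂_comp_left (Polynomial.evalRingHom t) Polynomial.C
        (fun s => Polynomial.C (pv p s) + Polynomial.X * Polynomial.C (x s - pv p s)) F
      have h1 : (Polynomial.evalRingHom t).comp Polynomial.C = RingHom.id ℂ := by
        refine RingHom.ext fun r => ?_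
        simp
      rw [h1] at hcl
      have h2 : (⇑(Polynomial.evalRingHom t) ∘ fun s =>
          Polynomial.C (pv p s) + Polynomial.X * Polynomial.C (x s - pv p s))
          = fun s => pv p s + t * (x s - pv p s) := by
        funext s
        simp [Polynomial.eval_add, Polynomial.eval_mul, Polynomial.eval_C,
          Polynomial.eval_X, mul_comm]
      rw [h2, eval₂_id] at hcl
      exact hcl
    have hG1 : Polynomial.eval 1 G ≠ 0 := by
      rw [hGeval]
      have : (fun s => pv p s + 1 * (x s - pv p s)) = x := by funext s; ring
      rw [this]
      exact hx
    have hGne : G ≠ 0 := fun h => hG1 (by simp [h])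
    have hdense : Dense {t : ℂ | G.IsRoot t}ᶜ :=
      (Polynomial.finite_setOf_isRoot hGne).countable.dense_compl ℂ
    set cmap : ℂ → Matrix (Fin d) (Fin d) ℂ × Matrix (Fin d) (Fin d) ℂ :=
      fun t => p + t • (p' - p) with hcm
    have hcmcont : Continuous cmap := continuous_const.add (continuous_id.smul continuous_const)
    have hcm0 : cmap 0 = p := by simp [hcm]
    have h0mem : cmap ⁻¹' U ∈ 𝓝 (0 : ℂ) :=
      hcmcont.continuousAt.preimage_mem_nhds (by rwa [hcm0])
    obtain ⟨V, hVU, hVo, hV0⟩ := mem_nhds_iff.mp h0mem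
    obtain ⟨t, htroot, htV⟩ := hdense.exists_mem_open hVo ⟨0, hV0⟩
    have hpvc : pv (cmap t) = fun s => pv p s + t * (x s - pv p s) := by
      funext s
      obtain ⟨c, i, j⟩ := s
      fin_cases c <;>
        simp [pv, hcm, hp', Matrix.add_apply, Matrix.smul_apply, Matrix.sub_apply,
          smul_eq_mul]
    have hft : f (cmap t) = Polynomial.eval t G := by
      show eval (pv (cmap t)) F = _
      rw [hpvc, hGeval]
    exact ⟨cmap t, hVU htV, by
      simp only [Set.mem_preimage, Set.mem_compl_iff, Set.mem_singleton_iff]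
      rw [hft]
      exact htroot⟩
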